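/- Let F be a finite field with q elements and fix a, b, c, d, e ∈ F. Then for at least q − 1 distinct values of f ∈ F, the equation a·x² − y² + b·x·y + c·y + (d − f)·x + e = 0 has a solution (x, y) ∈ F × F with x ≠ 0. -/

import Mathlib

set_option maxHeartbeats 1000000

private lemma stmt_4_aux {F : Type*} [Field F] (e m g s u : F) (he : e ≠ 0)
    (h2 : (2:F) ≠ 0) (hD : m^2 - 4*e*g = s^2) (hu : u = (s - m)/(2*e)) :
    e*u^2 + m*u + g = 0 := by
  subst hu
  field_simp
  linear_combination (-1) * hD

theorem stmt_4 (F : Type*) [Field F] [Fintype F] (a b c d e : F) :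
    Fintype.card F - 1 ≤
      Set.ncard {f : F | ∃ x y : F, x ≠ 0 ∧
        a * x ^ 2 - y ^ 2 + b * x * y + c * y + (d - f) * x + e = 0} := by
  classical
  set S : Set F := {f : F | ∃ x y : F, x ≠ 0 ∧
      a * x ^ 2 - y ^ 2 + b * x * y + c * y + (d - f) * x + e = 0} with hS
  set G : Set F := {f : F | ∃ u w : F, u ≠ 0 ∧
      e*u^2 + (c*w + (d - f))*u + (a + b*w - w^2) = 0} with hGdef
  have hGS : G ⊆ S := by
    rintro f ⟨u, w, hu, h⟩
    refine ⟨u⁻¹, w * u⁻¹, inv_ne_zero hu, ?_⟩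
    have hr : u * u⁻¹ = 1 := mul_inv_cancel₀ hu
    linear_combination u⁻¹^2*h - (c*w*u⁻¹ + (d-f)*u⁻¹ + e*(u*u⁻¹+1)) * hr
  have hne : (a + d + e) ∈ G := ⟨1, 0, one_ne_zero, by ring⟩
  have hmono : G.ncard ≤ S.ncard := Set.ncard_le_ncard hGS S.toFinite
  refine le_trans ?_ hmono
  by_cases hq : Fintype.card F ≤ 2
  · have h1 : 1 ≤ G.ncard := (Set.ncard_pos G.toFinite).mpr ⟨_, hne⟩
    omega
  -- main part: Gᶜ is a subsingleton
  have step : ∀ f₀ : F, (∀ f : F, f ≠ f₀ → f ∈ G) → Gᶜ.Subsingleton := by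
    intro f₀ h x hx y hy
    simp only [Set.mem_compl_iff] at hx hy
    have hx0 : x = f₀ := by by_contra h0; exact hx (h x h0)
    have hy0 : y = f₀ := by by_contra h0; exact hy (h y h0)
    rw [hx0, hy0]
  have hsub : Gᶜ.Subsingleton := by
    by_cases he : e = 0
    · -- e = 0 : pick w₀ with a + b w₀ - w₀² ≠ 0
      have hex : ∃ w₀ : F, a + b*w₀ - w₀^2 ≠ 0 := by
        by_contra hall
        push_neg at hall
        have hmem : ∀ w : F, w = 0 ∨ w = 1 := by
          intro w
          have key : w * (1 - w) = 0 := by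
            linear_combination hall w - hall 0 - w * (hall 1 - hall 0)
          rcases (mul_eq_zero.mp key) with h | h
          · exact Or.inl h
          · exact Or.inr (by linear_combination -h)
        have hss : (Finset.univ : Finset F) ⊆ {0, 1} := by
          intro w _
          rcases hmem w with h | h <;> simp [h]
        have := Finset.card_le_card hss
        rw [Finset.card_univ] at this
        have h2 : ({0, 1} : Finset F).card ≤ 2 := Finset.card_insert_le _ _ |>.trans (by simp)
        omega
      obtain ⟨w₀, hw₀⟩ := hex
      apply step (d + c*w₀)
      intro f hf
      have hd : f - (d + c*w₀) ≠ 0 := sub_ne_zero.mpr hf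
      refine ⟨(a + b*w₀ - w₀^2)/(f - (d + c*w₀)), w₀, div_ne_zero hw₀ hd, ?_⟩
      rw [he]
      linear_combination (-(a + b*w₀ - w₀^2)) * mul_inv_cancel₀ hd
    · by_cases hgr' : ∃ w₀ : F, a + b*w₀ - w₀^2 = 0
      · -- e ≠ 0, quadratic in w has a root
        obtain ⟨w₀, hw₀⟩ := hgr'
        apply step (d + c*w₀)
        intro f hf
        have hd : f - (d + c*w₀) ≠ 0 := sub_ne_zero.mpr hf
        refine ⟨(f - (d + c*w₀))/e, w₀, div_ne_zero hd he, ?_⟩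
        rw [hw₀]
        field_simp
        ring
      · push_neg at hgr'
        -- hgr' : ∀ w, a + b*w - w^2 ≠ 0
        by_cases h2 : ringChar F = 2
        · -- characteristic 2
          have htwo : (2 : F) = 0 := by
            have := ringChar.Nat.cast_ringChar (R := F)
            rw [h2] at this
            exact_mod_cast this
          have hb : b ≠ 0 := by
            intro hb0
            obtain ⟨r, hr⟩ := FiniteField.isSquare_of_char_two h2 a
            exact hgr' r (by linear_combination hr + r*r*htwo - r^2*htwo + r*hb0)
          by_cases hc : c = 0
          · -- hard case: char 2, c = 0, counting argument
            intro f₁ hf₁ f₂ hf₂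
            by_contra h12
            simp only [Set.mem_compl_iff] at hf₁ hf₂
            have Hbad : ∀ f : F, f ∉ G → ∀ u w : F,
                e*u^2 + (d - f)*u + (a + b*w - w^2) ≠ 0 := by
              intro f hf u w h
              apply hf
              refine ⟨u, w, ?_, by linear_combination h + u*w*hc⟩
              intro hu0
              apply hgr' w
              rw [hu0] at h
              linear_combination h
            have hp : ∀ f : F, f ∉ G → d - f ≠ 0 := by
              intro f hf hp0
              obtain ⟨r, hr⟩ := FiniteField.isSquare_of_char_two h2 (-(a/e))
              have her : e * (r*r) = -a := by
                rw [← hr, mul_neg, mul_div_cancel₀ a he]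
              exact Hbad f hf r 0 (by linear_combination her + r * hp0)
            -- Finset images
            set Gim : Finset F := Finset.image (fun w : F => w^2 - b*w - a) Finset.univ with hGim
            have hdis : ∀ (f : F), f ∉ G →
                ∀ v ∈ Finset.image (fun u : F => e*u^2 + (d-f)*u) Finset.univ, v ∉ Gim := by
              intro f hf v hv hvG
              obtain ⟨u, -, hu⟩ := Finset.mem_image.mp hv
              obtain ⟨w, -, hw⟩ := Finset.mem_image.mp hvG
              exact Hbad f hf u w (by linear_combination hu - hw)
            have hcardφ : ∀ p : F, p ≠ 0 →
                Fintype.card F ≤ 2 * (Finset.image (fun u : F => e*u^2 + p*u) Finset.univ).card := by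
              intro p hp0
              have := Finset.card_le_mul_card_image (f := fun u : F => e*u^2 + p*u)
                Finset.univ 2 ?_
              · simpa [Finset.card_univ] using this
              · intro v hv
                obtain ⟨u₀, -, hu₀⟩ := Finset.mem_image.mp hv
                have hsubset : (Finset.univ.filter fun u : F => e*u^2 + p*u = v) ⊆
                    {u₀, -(p/e) - u₀} := by
                  intro u hu
                  simp only [Finset.mem_filter, Finset.mem_univ, true_and] at hu
                  have key : (u - u₀) * (e*(u + u₀) + p) = 0 := by
                    linear_combination hu - hu₀
                  simp only [Finset.mem_insert, Finset.mem_singleton]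
                  rcases mul_eq_zero.mp key with h | h
                  · exact Or.inl (by linear_combination h)
                  · refine Or.inr ?_
                    field_simp
                    linear_combination h
                calc (Finset.univ.filter fun u : F => e*u^2 + p*u = v).card
                    ≤ ({u₀, -(p/e) - u₀} : Finset F).card := Finset.card_le_card hsubset
                  _ ≤ 2 := Finset.card_insert_le _ _ |>.trans (by simp)
            have hcardG : Fintype.card F ≤ 2 * Gim.card := by
              have := Finset.card_le_mul_card_image (f := fun w : F => w^2 - b*w - a)
                Finset.univ 2 ?_
              · simpa [Finset.card_univ, hGim] using this
              · intro v hv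
                obtain ⟨w₀, -, hw₀⟩ := Finset.mem_image.mp hv
                have hsubset : (Finset.univ.filter fun w : F => w^2 - b*w - a = v) ⊆
                    {w₀, b - w₀} := by
                  intro w hw
                  simp only [Finset.mem_filter, Finset.mem_univ, true_and] at hw
                  have key : (w - w₀) * (w + w₀ - b) = 0 := by
                    linear_combination hw - hw₀
                  simp only [Finset.mem_insert, Finset.mem_singleton]
                  rcases mul_eq_zero.mp key with h | h
                  · exact Or.inl (by linear_combination h)
                  · exact Or.inr (by linear_combination h)
                calc (Finset.univ.filter fun w : F => w^2 - b*w - a = v).card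
                    ≤ ({w₀, b - w₀} : Finset F).card := Finset.card_le_card hsubset
                  _ ≤ 2 := Finset.card_insert_le _ _ |>.trans (by simp)
            have hVeq : ∀ f : F, f ∉ G →
                Finset.image (fun u : F => e*u^2 + (d-f)*u) Finset.univ =
                  Finset.univ \ Gim := by
              intro f hf
              apply Finset.eq_of_subset_of_card_le
              · intro v hv
                exact Finset.mem_sdiff.mpr ⟨Finset.mem_univ _, hdis f hf v hv⟩
              · have h1 := hcardφ (d - f) (hp f hf)
                have h3 : (Finset.univ \ Gim).card = Fintype.card F - Gim.card := by
                  rw [Finset.card_sdiff_of_subset (Finset.subset_univ _), Finset.card_univ]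
                omega
            have hV12 := (hVeq f₁ hf₁).trans (hVeq f₂ hf₂).symm
            -- closure of V₁ under subtraction
            have hclose : ∀ x ∈ Finset.image (fun u : F => e*u^2 + (d-f₁)*u) Finset.univ,
                ∀ y ∈ Finset.image (fun u : F => e*u^2 + (d-f₁)*u) Finset.univ,
                x - y ∈ Finset.image (fun u : F => e*u^2 + (d-f₁)*u) Finset.univ := by
              intro x hx y hy
              obtain ⟨u, -, hu⟩ := Finset.mem_image.mp hx
              obtain ⟨u', -, hu'⟩ := Finset.mem_image.mp hy
              refine Finset.mem_image.mpr ⟨u - u', Finset.mem_univ _, ?_⟩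
              linear_combination hu - hu' + e*u'*(u' - u)*htwo
            have hden : (d - f₁) - (d - f₂) ≠ 0 := by
              intro h; exact h12 (by linear_combination -h)
            set t : F := (-a) / ((d - f₁) - (d - f₂)) with ht
            have h1m : e*t^2 + (d-f₁)*t ∈
                Finset.image (fun u : F => e*u^2 + (d-f₁)*u) Finset.univ :=
              Finset.mem_image_of_mem _ (Finset.mem_univ t)
            have h2m : e*t^2 + (d-f₂)*t ∈
                Finset.image (fun u : F => e*u^2 + (d-f₁)*u) Finset.univ := by
              rw [hV12]
              exact Finset.mem_image_of_mem _ (Finset.mem_univ t)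
            have hmem := hclose _ h1m _ h2m
            have heq : (e*t^2 + (d-f₁)*t) - (e*t^2 + (d-f₂)*t) = -a := by
              have hcancel : ((d - f₁) - (d - f₂)) * t = -a := by
                rw [ht]; exact mul_div_cancel₀ (-a) hden
              linear_combination hcancel
            rw [heq] at hmem
            have haG : -a ∈ Gim := Finset.mem_image.mpr ⟨0, Finset.mem_univ 0, by ring⟩
            exact hdis f₁ hf₁ (-a) hmem haG
          · -- char 2, c ≠ 0 : every f is good
            apply step 0
            intro f _
            have hu : b / c ≠ 0 := div_ne_zero hb hc
            obtain ⟨r, hr⟩ := FiniteField.isSquare_of_char_two h2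
              (e*(b/c)^2 + (d - f)*(b/c) + a)
            refine ⟨b/c, r, hu, ?_⟩
            have hcb : c * (b / c) = b := mul_div_cancel₀ b hc
            linear_combination hr + r*hcb + b*r*htwo - r^2*htwo + r*r*htwo
        · -- characteristic ≠ 2
          have htwo : (2 : F) ≠ 0 := Ring.two_ne_zero h2
          have hfour : (4 : F) ≠ 0 := by
            intro h4
            exact htwo (by
              have h22 : (2:F) * 2 = 0 := by linear_combination h4
              rcases mul_eq_zero.mp h22 with h | h <;> exact h)
          by_cases hce : c^2 + 4*e = 0
          · -- degenerate: c² + 4e = 0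
            have hc0 : c ≠ 0 := by
              intro hc0
              apply he
              have h4e : (4:F) * e = 0 := by linear_combination hce - c*hc0
              rcases mul_eq_zero.mp h4e with h | h
              · exact absurd h hfour
              · exact h
            apply step (d + c*b/2)
            intro f hf
            have hslope : c*(2*(d-f) + c*b) ≠ 0 := by
              apply mul_ne_zero hc0
              intro hz
              apply hf
              field_simp
              linear_combination -hz
            set w₀ : F := -((d-f)^2 - 4*e*a)/(c*(2*(d-f) + c*b)) with hw₀
            have hKw : (c*(2*(d-f) + c*b)) * w₀ = -((d-f)^2 - 4*e*a) := by
              rw [hw₀]; exact mul_div_cancel₀ _ hslope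
            have hDzero : (c*w₀ + (d-f))^2 - 4*e*(a + b*w₀ - w₀^2) = 0^2 := by
              linear_combination (w₀^2 - b*w₀) * hce + hKw
            have hm : c*w₀ + (d-f) ≠ 0 := by
              intro hm0
              apply hgr' w₀
              have h4 : (4*e) * (a + b*w₀ - w₀^2) = 0 := by
                linear_combination -hDzero + (c*w₀ + (d-f))*hm0
              rcases mul_eq_zero.mp h4 with h | h
              · exact absurd h (mul_ne_zero hfour he)
              · exact h
            refine ⟨(0 - (c*w₀ + (d-f)))/(2*e), w₀, ?_, ?_⟩
            · exact div_ne_zero (by simpa using neg_ne_zero.mpr hm) (mul_ne_zero htwo he)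
            · exact stmt_4_aux e _ _ 0 _ he htwo hDzero rfl
          · -- nondegenerate: use exists_root_sum_quadratic
            apply step 0
            intro f _
            obtain ⟨w, s, hws⟩ := FiniteField.exists_root_sum_quadratic
              (f := Polynomial.C (c^2+4*e) * Polynomial.X^2 +
                Polynomial.C (2*c*(d-f) - 4*e*b) * Polynomial.X +
                Polynomial.C ((d-f)^2 - 4*e*a))
              (g := Polynomial.C (-1) * Polynomial.X^2 + Polynomial.C 0 * Polynomial.X +
                Polynomial.C 0)
              (Polynomial.degree_quadratic hce)
              (Polynomial.degree_quadratic (neg_ne_zero.mpr one_ne_zero))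
              (FiniteField.odd_card_of_char_ne_two h2)
            simp only [Polynomial.eval_add, Polynomial.eval_mul, Polynomial.eval_pow,
              Polynomial.eval_C, Polynomial.eval_X] at hws
            have hDs : (c*w + (d-f))^2 - 4*e*(a + b*w - w^2) = s^2 := by
              linear_combination hws
            refine ⟨(s - (c*w + (d-f)))/(2*e), w, ?_, ?_⟩
            · apply div_ne_zero _ (mul_ne_zero htwo he)
              intro h0
              apply hgr' w
              have h4 : (4*e) * (a + b*w - w^2) = 0 := by
                linear_combination -hDs - (s + (c*w + (d-f)))*h0
              rcases mul_eq_zero.mp h4 with h | h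
              · exact absurd h (mul_ne_zero hfour he)
              · exact h
            · exact stmt_4_aux e _ _ s _ he htwo hDs rfl
  have hcard : G.ncard + Gᶜ.ncard = Fintype.card F := by
    rw [Set.ncard_add_ncard_compl, Nat.card_eq_fintype_card]
  have hle1 : Gᶜ.ncard ≤ 1 := by
    rcases hsub.eq_empty_or_singleton with h | ⟨x, h⟩ <;> simp [h]
  omega
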